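/- arXiv:1710.00529 — 3 statements merged into one kernel-verified Lean document; each statement's English description precedes it below -/
import Mathlib

section
/- Let Π_h : Y → Y_h be a bounded linear projection onto a subspace Y_h of the Hilbert space Y with Π_h|_{Y_h} = id, and let b' : X_h × Y → ℝ be a bounded bilinear form with b'(ξ_h, y − Π_h y) = 0 for all ξ_h ∈ X_h and y ∈ Y. If β := inf_{ξ_h ∈ X_h, ‖ξ_h‖=1} sup_{η ∈ Y, ‖η‖=1} b'(ξ_h, η) > 0, then the discrete inf-sup constant over Y_h satisfies β / ‖Π_h‖ ≤ inf_{ξ_h ∈ X_h, ‖ξ_h‖=1} sup_{η_h ∈ Y_h, ‖η_h‖=1} b'(ξ_h, η_h). -/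
/-- Fortin projection implies a discrete inf-sup condition. -/
theorem fortin_discrete_inf_sup
    (Xh Y : Type*) [NormedAddCommGroup Xh] [NormedSpace ℝ Xh]
    [NormedAddCommGroup Y] [InnerProductSpace ℝ Y] [CompleteSpace Y]
    (Yh : Submodule ℝ Y) (hYh : IsClosed (Yh : Set Y))
    (Ph : Y →L[ℝ] Y)
    (hrange : ∀ y : Y, Ph y ∈ Yh)
    (hproj : ∀ y ∈ Yh, Ph y = y)
    (b' : Xh →L[ℝ] Y →L[ℝ] ℝ)
    (hfortin : ∀ (ξh : Xh) (y : Y), b' ξh (y - Ph y) = 0)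
    (β : ℝ)
    (hβ : β = ⨅ ξh : Metric.sphere (0 : Xh) 1, ⨆ η : Metric.sphere (0 : Y) 1,
      b' (ξh : Xh) (η : Y))
    (hβpos : 0 < β) :
    β / ‖Ph‖ ≤ ⨅ ξh : Metric.sphere (0 : Xh) 1, ⨆ ηh : Metric.sphere (0 : Yh) 1,
      b' (ξh : Xh) ((ηh : Yh) : Y) := by
  -- The sphere of Xh is nonempty, otherwise β = 0.
  have hXne : Nonempty (Metric.sphere (0 : Xh) 1) := by
    by_contra h
    rw [not_nonempty_iff] at h
    rw [hβ, Real.iInf_of_isEmpty] at hβpos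
    exact lt_irrefl _ hβpos
  -- b' ξ y = b' ξ (Ph y)
  have hb : ∀ (ξ : Xh) (y : Y), b' ξ y = b' ξ (Ph y) := by
    intro ξ y
    have h := hfortin ξ y
    rw [map_sub, sub_eq_zero] at h
    exact h
  -- Yh contains a nonzero vector, else β = 0.
  by_cases htriv : ∀ w ∈ Yh, w = (0 : Y)
  · exfalso
    have hb0 : ∀ (ξ : Xh) (y : Y), b' ξ y = 0 := by
      intro ξ y
      rw [hb ξ y, htriv _ (hrange y), map_zero]
    have hβ0 : β = 0 := by
      rw [hβ]
      have : ∀ ξ : Metric.sphere (0 : Xh) 1,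
          (⨆ η : Metric.sphere (0 : Y) 1, b' (ξ : Xh) (η : Y)) = 0 := by
        intro ξ
        rcases isEmpty_or_nonempty (Metric.sphere (0 : Y) 1) with h | h
        · exact Real.iSup_of_isEmpty _
        · simp [hb0]
      rw [iInf_congr this]
      exact ciInf_const
    linarith
  push_neg at htriv
  obtain ⟨w, hwY, hw0⟩ := htriv
  have hwn : (0 : ℝ) < ‖w‖ := norm_pos_iff.mpr hw0
  -- a unit vector in Yh
  have hwh : ‖(‖w‖⁻¹ • (⟨w, hwY⟩ : Yh))‖ = 1 := by
    rw [norm_smul]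
    simp only [norm_inv, norm_norm]
    rw [show ‖(⟨w, hwY⟩ : Yh)‖ = ‖w‖ from rfl]
    field_simp
  have hYhne : Nonempty (Metric.sphere (0 : Yh) 1) :=
    ⟨⟨‖w‖⁻¹ • (⟨w, hwY⟩ : Yh), by simpa [Metric.mem_sphere, dist_zero_right] using hwh⟩⟩
  have hYne : Nonempty (Metric.sphere (0 : Y) 1) := by
    refine ⟨⟨‖w‖⁻¹ • w, ?_⟩⟩
    simp only [Metric.mem_sphere, dist_zero_right, norm_smul, norm_inv, norm_norm]
    field_simp
  -- ‖Ph‖ ≥ 1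
  have hPh1 : (1 : ℝ) ≤ ‖Ph‖ := by
    have h1 : ‖Ph w‖ ≤ ‖Ph‖ * ‖w‖ := Ph.le_opNorm w
    rw [hproj w hwY] at h1
    nlinarith
  have hPhpos : (0 : ℝ) < ‖Ph‖ := lt_of_lt_of_le one_pos hPh1
  -- main estimate for each unit ξ
  have key : ∀ ξ : Metric.sphere (0 : Xh) 1,
      β / ‖Ph‖ ≤ ⨆ ηh : Metric.sphere (0 : Yh) 1, b' (ξ : Xh) ((ηh : Yh) : Y) := by
    intro ξ
    have hξ1 : ‖(ξ : Xh)‖ = 1 := by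
      have := ξ.2
      simpa [Metric.mem_sphere, dist_zero_right] using this
    set S := ⨆ ηh : Metric.sphere (0 : Yh) 1, b' (ξ : Xh) ((ηh : Yh) : Y) with hS
    have hSbdd : BddAbove (Set.range fun ηh : Metric.sphere (0 : Yh) 1 =>
        b' (ξ : Xh) ((ηh : Yh) : Y)) := by
      refine ⟨‖b' (ξ : Xh)‖, ?_⟩
      rintro x ⟨ηh, rfl⟩
      have h1 : ‖((ηh : Yh) : Y)‖ = 1 := by
        have h := ηh.2
        rw [Metric.mem_sphere, dist_zero_right] at h
        exact h
      calc b' (ξ : Xh) ((ηh : Yh) : Y) ≤ |b' (ξ : Xh) ((ηh : Yh) : Y)| := le_abs_self _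
        _ ≤ ‖b' (ξ : Xh)‖ * ‖((ηh : Yh) : Y)‖ := (b' (ξ : Xh)).le_opNorm _
        _ = ‖b' (ξ : Xh)‖ := by rw [h1, mul_one]
    have hS0 : 0 ≤ S := by
      obtain ⟨ηh0⟩ := hYhne
      have hneg : ‖(-(ηh0 : Yh) : Yh)‖ = 1 := by
        have := ηh0.2
        simpa [Metric.mem_sphere, dist_zero_right] using this
      have hmem : (-(ηh0 : Yh) : Yh) ∈ Metric.sphere (0 : Yh) 1 := by
        simpa [Metric.mem_sphere, dist_zero_right] using hneg
      have h1 : b' (ξ : Xh) ((ηh0 : Yh) : Y) ≤ S := le_ciSup hSbdd ηh0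
      have h2 : b' (ξ : Xh) (((⟨-(ηh0 : Yh), hmem⟩ : Metric.sphere (0 : Yh) 1) : Yh) : Y) ≤ S :=
        le_ciSup hSbdd _
      simp only [Submodule.coe_neg, map_neg] at h2
      linarith
    -- every unit η : Y has b' ξ η ≤ ‖Ph‖ * S
    have hub : ∀ η : Metric.sphere (0 : Y) 1, b' (ξ : Xh) (η : Y) ≤ ‖Ph‖ * S := by
      intro η
      have hη1 : ‖(η : Y)‖ = 1 := by
        have := η.2
        simpa [Metric.mem_sphere, dist_zero_right] using this
      rw [hb (ξ : Xh) (η : Y)]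
      by_cases hP0 : Ph (η : Y) = 0
      · rw [hP0, map_zero]
        exact mul_nonneg (norm_nonneg _) hS0
      · set c := ‖Ph (η : Y)‖ with hc
        have hcpos : 0 < c := norm_pos_iff.mpr hP0
        have hcle : c ≤ ‖Ph‖ := by
          have := Ph.le_opNorm (η : Y)
          rwa [hη1, mul_one] at this
        -- unit vector in Yh
        have hmem : (c⁻¹ • (⟨Ph (η : Y), hrange (η : Y)⟩ : Yh)) ∈ Metric.sphere (0 : Yh) 1 := by
          simp only [Metric.mem_sphere, dist_zero_right, norm_smul, norm_inv,
            Real.norm_eq_abs, abs_of_pos hcpos]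
          rw [show ‖(⟨Ph (η : Y), hrange (η : Y)⟩ : Yh)‖ = c from rfl]
          field_simp
        set u : Metric.sphere (0 : Yh) 1 := ⟨_, hmem⟩ with hu
        have hPhrw : Ph (η : Y) = c • ((u : Yh) : Y) := by
          simp only [hu, Submodule.coe_smul]
          rw [smul_smul]
          field_simp
          rw [one_smul]
        have hvle : b' (ξ : Xh) ((u : Yh) : Y) ≤ S := le_ciSup hSbdd u
        rw [hPhrw, map_smul, smul_eq_mul]
        calc c * b' (ξ : Xh) ((u : Yh) : Y) ≤ c * S :=
              mul_le_mul_of_nonneg_left hvle (le_of_lt hcpos)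
          _ ≤ ‖Ph‖ * S := mul_le_mul_of_nonneg_right hcle hS0
    have hsup : (⨆ η : Metric.sphere (0 : Y) 1, b' (ξ : Xh) (η : Y)) ≤ ‖Ph‖ * S :=
      ciSup_le hub
    -- β ≤ sup
    have hbddb : BddBelow (Set.range fun ξh : Metric.sphere (0 : Xh) 1 =>
        ⨆ η : Metric.sphere (0 : Y) 1, b' (ξh : Xh) (η : Y)) := by
      refine ⟨-‖b'‖, ?_⟩
      rintro x ⟨ξh, rfl⟩
      have hξh1 : ‖(ξh : Xh)‖ = 1 := by
        have := ξh.2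
        simpa [Metric.mem_sphere, dist_zero_right] using this
      obtain ⟨η0⟩ := hYne
      have hη01 : ‖(η0 : Y)‖ = 1 := by
        have := η0.2
        simpa [Metric.mem_sphere, dist_zero_right] using this
      have hbdd2 : BddAbove (Set.range fun η : Metric.sphere (0 : Y) 1 =>
          b' (ξh : Xh) (η : Y)) := by
        refine ⟨‖b' (ξh : Xh)‖, ?_⟩
        rintro x ⟨η, rfl⟩
        have h1 : ‖(η : Y)‖ = 1 := by
          have := η.2
          simpa [Metric.mem_sphere, dist_zero_right] using this
        calc b' (ξh : Xh) (η : Y) ≤ |b' (ξh : Xh) (η : Y)| := le_abs_self _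
          _ ≤ ‖b' (ξh : Xh)‖ * ‖(η : Y)‖ := (b' (ξh : Xh)).le_opNorm _
          _ = ‖b' (ξh : Xh)‖ := by rw [h1, mul_one]
      have h1 : b' (ξh : Xh) (η0 : Y) ≤ ⨆ η : Metric.sphere (0 : Y) 1, b' (ξh : Xh) (η : Y) :=
        le_ciSup hbdd2 η0
      have h2 : -‖b'‖ ≤ b' (ξh : Xh) (η0 : Y) := by
        have habs : |b' (ξh : Xh) (η0 : Y)| ≤ ‖b'‖ := by
          calc |b' (ξh : Xh) (η0 : Y)| ≤ ‖b' (ξh : Xh)‖ * ‖(η0 : Y)‖ :=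
                (b' (ξh : Xh)).le_opNorm _
            _ ≤ ‖b'‖ * ‖(ξh : Xh)‖ * ‖(η0 : Y)‖ :=
                mul_le_mul_of_nonneg_right (b'.le_opNorm _) (norm_nonneg _)
            _ = ‖b'‖ := by rw [hξh1, hη01]; ring
        linarith [neg_abs_le (b' (ξh : Xh) (η0 : Y))]
      linarith
    have hβle : β ≤ ⨆ η : Metric.sphere (0 : Y) 1, b' (ξ : Xh) (η : Y) := by
      rw [hβ]
      exact ciInf_le hbddb ξ
    have : β ≤ ‖Ph‖ * S := le_trans hβle hsup
    rw [div_le_iff₀ hPhpos]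
    linarith
  exact le_ciInf key
end

section
/- Let b : X_h × Y_h → ℝ be Fréchet differentiable in the first variable with values linear in the second, on finite-dimensional spaces X_h and a finite-dimensional Hilbert space Y_h, and let Φ(ξ) := ½‖F − b(ξ;·)‖²_{Y_h*}. If x_h is a stationary point of Φ and y_h ∈ Y_h is the Riesz representation of F − b(x_h;·), then (x_h, y_h) satisfies the mixed system: ⟨y_h, η⟩ + b(x_h; η) = F(η) for all η ∈ Y_h and b'(x_h; ξ, y_h) = 0 for all ξ ∈ X_h. Conversely, any solution (x_h, y_h) of the mixed system yields a stationary point x_h of Φ. -/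
open scoped RealInnerProductSpace

/-- equivalence of stationary points of the discrete minimal
residual functional Φ with solutions of the mixed system. -/
theorem dpg_stationary_iff_mixed
    (X Y : Type*) [NormedAddCommGroup X] [NormedSpace ℝ X]
    [FiniteDimensional ℝ X]
    [NormedAddCommGroup Y] [InnerProductSpace ℝ Y] [FiniteDimensional ℝ Y]
    (B : X → (Y →L[ℝ] ℝ)) (DB : X → X →L[ℝ] (Y →L[ℝ] ℝ))
    (hB : ∀ ξ, HasFDerivAt B (DB ξ) ξ)
    (F : Y →L[ℝ] ℝ)
    (Φ : X → ℝ) (hΦ : ∀ ξ, Φ ξ = ‖F - B ξ‖ ^ 2 / 2)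
    (xh : X) (yh : Y)
    (hyh : ∀ η : Y, ⟪yh, η⟫ = F η - B xh η) :
    (∀ ξ : X, HasDerivAt (fun t : ℝ => Φ (xh + t • ξ)) 0 0) ↔
      ((∀ η : Y, ⟪yh, η⟫ + B xh η = F η) ∧ ∀ ξ : X, DB xh ξ yh = 0) := by
  set T := (InnerProductSpace.toDual ℝ Y).symm with hT
  have hT0 : T (F - B xh) = yh := by
    apply ext_inner_right ℝ
    intro η
    rw [InnerProductSpace.toDual_symm_apply, hyh]
    simp
  have key : ∀ ξ : X, HasDerivAt (fun t : ℝ => Φ (xh + t • ξ)) (-(DB xh ξ yh)) 0 := by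
    intro ξ
    have hline : HasDerivAt (fun t : ℝ => xh + t • ξ) ξ 0 := by
      simpa using ((hasDerivAt_id (0:ℝ)).smul_const ξ).const_add xh
    have hBt : HasDerivAt (fun t : ℝ => B (xh + t • ξ)) (DB xh ξ) 0 := by
      have hx0 : xh + (0:ℝ) • ξ = xh := by simp
      have hB' : HasFDerivAt B (DB xh) (xh + (0:ℝ) • ξ) := by rw [hx0]; exact hB xh
      exact hB'.comp_hasDerivAt 0 hline
    have hres : HasDerivAt (fun t : ℝ => F - B (xh + t • ξ)) (-(DB xh ξ)) 0 :=
      hBt.const_sub F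
    have hg : HasDerivAt (fun t : ℝ => T (F - B (xh + t • ξ))) (T (-(DB xh ξ))) 0 := by
      have := (T.toContinuousLinearEquiv.hasFDerivAt).comp_hasDerivAt 0 hres
      exact this
    have hInner : HasDerivAt
        (fun t : ℝ => ⟪T (F - B (xh + t • ξ)), T (F - B (xh + t • ξ))⟫)
        (⟪T (F - B (xh + (0:ℝ) • ξ)), T (-(DB xh ξ))⟫ +
          ⟪T (-(DB xh ξ)), T (F - B (xh + (0:ℝ) • ξ))⟫) 0 := hg.inner ℝ hg
    have hval : (⟪T (F - B (xh + (0:ℝ) • ξ)), T (-(DB xh ξ))⟫ +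
          ⟪T (-(DB xh ξ)), T (F - B (xh + (0:ℝ) • ξ))⟫) / 2 = -(DB xh ξ yh) := by
      have h0 : xh + (0:ℝ) • ξ = xh := by simp
      rw [h0, hT0, real_inner_comm (T (-(DB xh ξ))) yh]
      rw [InnerProductSpace.toDual_symm_apply]
      ring_nf
      simp
    have hΦeq : (fun t : ℝ => Φ (xh + t • ξ)) =
        fun t : ℝ => ⟪T (F - B (xh + t • ξ)), T (F - B (xh + t • ξ))⟫ / 2 := by
      funext t
      rw [hΦ, real_inner_self_eq_norm_sq, LinearIsometryEquiv.norm_map]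
    rw [hΦeq, ← hval]
    exact hInner.div_const 2
  constructor
  · intro h
    refine ⟨fun η => by rw [hyh]; ring, fun ξ => ?_⟩
    have := (key ξ).unique (h ξ)
    linarith
  · rintro ⟨-, h2⟩ ξ
    simpa [h2 ξ] using key ξ
end

section
/- With Φ(ξ) := ½‖F − b(ξ;·)‖²_{Y_h*} twice differentiable at a stationary point x_h with Riesz representation y_h of the residual, the second directional derivative of Φ at x_h in direction ξ_h equals ‖b'(x_h; ξ_h, ·)‖²_{Y_h*} − b''(x_h; ξ_h, ξ_h, y_h). Consequently, if x_h is a local minimizer then b''(x_h; ξ_h, ξ_h, y_h) ≤ ‖b'(x_h; ξ_h, ·)‖²_{Y_h*} for all ξ_h, and if the strict inequality holds for all ξ_h ≠ 0 then x_h is a locally unique minimizer. -/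
set_option maxHeartbeats 1000000

set_option synthInstance.maxHeartbeats 800000
open scoped RealInnerProductSpace

lemma aux_second_nonneg {g g' : ℝ → ℝ} {S : ℝ}
    (hg : ∀ t, HasDerivAt g (g' t) t) (h0 : g' 0 = 0)
    (hS : HasDerivAt g' S 0) (hmin : IsLocalMin g 0) : 0 ≤ S := by
  by_contra hneg
  push_neg at hneg
  -- slope of g' tends to S < 0
  have hslope := hasDerivAt_iff_tendsto_slope.1 hS
  have hev : ∀ᶠ t in nhdsWithin 0 (Set.Ioi 0), g' t < 0 := by
    have h1 : ∀ᶠ t in nhdsWithin 0 ({0}ᶜ), slope g' 0 t < 0 :=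
      hslope.eventually (eventually_lt_nhds hneg)
    have h2 : ∀ᶠ t in nhdsWithin (0:ℝ) (Set.Ioi 0), slope g' 0 t < 0 :=
      h1.filter_mono (nhdsWithin_mono _ (fun t ht => ne_of_gt ht))
    filter_upwards [h2, self_mem_nhdsWithin] with t ht ht0
    have : slope g' 0 t = g' t / t := by
      simp [slope_def_field, h0]
    rw [this] at ht
    have := mul_neg_of_neg_of_pos ht (show (0:ℝ) < t from ht0)
    rw [div_mul_cancel₀] at this
    · exact this
    · exact ne_of_gt ht0
  obtain ⟨u, hu, hIoc⟩ := mem_nhdsGT_iff_exists_Ioc_subset.1 hev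
  obtain ⟨ε, hε, hball⟩ := Metric.eventually_nhds_iff.1 hmin
  set δ : ℝ := min u (ε/2) with hδdef
  have hδpos : 0 < δ := lt_min hu (by linarith)
  have hanti : StrictAntiOn g (Set.Icc 0 δ) := by
    apply strictAntiOn_of_deriv_neg (convex_Icc _ _)
    · exact fun t _ => (hg t).continuousAt.continuousWithinAt
    · intro t ht
      rw [interior_Icc] at ht
      rw [(hg t).deriv]
      exact hIoc ⟨ht.1, le_trans ht.2.le (min_le_left _ _)⟩
  have h1 : g δ < g 0 := hanti (Set.left_mem_Icc.2 hδpos.le) (Set.right_mem_Icc.2 hδpos.le) hδpos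
  have h2 : g 0 ≤ g δ := by
    apply hball
    simp only [dist_zero_right, Real.norm_eq_abs, abs_of_pos hδpos]
    calc δ ≤ ε/2 := min_le_right _ _
    _ < ε := by linarith
  linarith

lemma aux_strict_min {X : Type*} [NormedAddCommGroup X] [NormedSpace ℝ X]
    [FiniteDimensional ℝ X]
    {f : X → ℝ} {f' : X → X →L[ℝ] ℝ} {f'' : X →L[ℝ] X →L[ℝ] ℝ} {a : X}
    (hf : ∀ ξ, HasFDerivAt f (f' ξ) ξ) (hf' : HasFDerivAt f' f'' a)
    (h0 : f' a = 0) (hpos : ∀ v : X, v ≠ 0 → 0 < f'' v v) :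
    ∃ U ∈ nhds a, ∀ z ∈ U, z ≠ a → f a < f z := by
  rcases subsingleton_or_nontrivial X with hX | hX
  · exact ⟨Set.univ, Filter.univ_mem, fun z _ hz => absurd (Subsingleton.elim z a) hz⟩
  have hsymm : ∀ v w : X, f'' v w = f'' w v := second_derivative_symmetric hf hf'
  -- q is continuous
  have hqcont : Continuous fun v : X => f'' v v :=
    (f''.continuous.clm_apply continuous_id)
  -- minimum on the sphere
  obtain ⟨u, hu_mem, hu_min⟩ :=
    (isCompact_sphere (0:X) 1).exists_isMinOn
      (NormedSpace.sphere_nonempty.2 zero_le_one) hqcont.continuousOn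
  have hu_norm : ‖u‖ = 1 := mem_sphere_zero_iff_norm.1 hu_mem
  set c : ℝ := f'' u u with hc
  have hcpos : 0 < c := hpos u (by intro h; rw [h, norm_zero] at hu_norm; norm_num at hu_norm)
  have hlower : ∀ v : X, c * ‖v‖ ^ 2 ≤ f'' v v := by
    intro v
    rcases eq_or_ne v 0 with rfl | hv
    · simp
    · have hnv : (0:ℝ) < ‖v‖ := norm_pos_iff.2 hv
      have hmem : (‖v‖⁻¹ • v) ∈ Metric.sphere (0:X) 1 := by
        simp [norm_smul, abs_of_pos (inv_pos.2 hnv), inv_mul_cancel₀ hnv.ne']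
      have key : f'' v v = ‖v‖ ^ 2 * f'' (‖v‖⁻¹ • v) (‖v‖⁻¹ • v) := by
        simp only [map_smul, ContinuousLinearMap.smul_apply, smul_eq_mul]
        field_simp
      have := hu_min hmem
      rw [key]
      calc c * ‖v‖ ^ 2 ≤ f'' (‖v‖⁻¹ • v) (‖v‖⁻¹ • v) * ‖v‖ ^ 2 := by
            apply mul_le_mul_of_nonneg_right this (by positivity)
      _ = ‖v‖ ^ 2 * f'' (‖v‖⁻¹ • v) (‖v‖⁻¹ • v) := by ring
  -- Peano remainder estimate with ε = c/4
  have hε : (0:ℝ) < c/4 := by linarith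
  have hlittleo := hf'.isLittleO.def hε
  obtain ⟨r, hr, hball⟩ := Metric.eventually_nhds_iff.1 hlittleo
  -- the auxiliary function h
  set h : X → X → ℝ := fun v w => f (a + w) - f' a w - f'' w w / 2 with hh
  have hderiv : ∀ w : X, HasFDerivAt (fun w => f (a + w) - f' a w - f'' w w / 2)
      (f' (a + w) - f' a - f'' w) w := by
    intro w
    have h1 : HasFDerivAt (fun w : X => f (a + w)) (f' (a + w)) w := by
      have := (hf (a + w)).comp w ((hasFDerivAt_id w).const_add a)
      simpa [Function.comp_def] using this
    have h2 : HasFDerivAt (fun w : X => f' a w) (f' a) w := (f' a).hasFDerivAt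
    have h3 : HasFDerivAt (fun w : X => f'' w w / 2) (f'' w) w := by
      have hb := (f''.hasFDerivAt_of_bilinear (hasFDerivAt_id w) (hasFDerivAt_id w)).const_smul
        (2⁻¹ : ℝ)
      have heqfun : (fun w : X => f'' w w / 2)
          = fun w : X => (2⁻¹ : ℝ) • (f'' (id w) (id w)) := by
        funext z; simp [smul_eq_mul]; ring
      rw [heqfun]
      refine hb.congr_fderiv ?_
      ext z
      simp [hsymm w z, smul_eq_mul]
      ring
    exact (h1.sub h2).sub h3
  -- main estimate
  refine ⟨Metric.ball a r, Metric.ball_mem_nhds a hr, fun z hz hzne => ?_⟩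
  set v : X := z - a with hv
  have hvne : v ≠ 0 := sub_ne_zero.2 hzne
  have hvlt : ‖v‖ < r := by simpa [hv, dist_eq_norm] using hz
  have hbound : ∀ w ∈ Metric.closedBall (0:X) ‖v‖,
      ‖f' (a + w) - f' a - f'' w‖ ≤ (c/4) * ‖v‖ := by
    intro w hw
    have hwv : ‖w‖ ≤ ‖v‖ := by simpa using hw
    have hdist : dist (a + w) a < r := by
      simp only [dist_eq_norm, add_sub_cancel_left]
      exact lt_of_le_of_lt hwv hvlt
    have := hball hdist
    simp only [add_sub_cancel_left] at this
    calc ‖f' (a + w) - f' a - f'' w‖ ≤ c/4 * ‖w‖ := this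
    _ ≤ c/4 * ‖v‖ := by nlinarith
  have hmv := (convex_closedBall (0:X) ‖v‖).norm_image_sub_le_of_norm_hasFDerivWithin_le
    (fun w hw => (hderiv w).hasFDerivWithinAt) hbound
    (Metric.mem_closedBall_self (norm_nonneg v))
    (by simpa using le_refl ‖v‖ : v ∈ Metric.closedBall (0:X) ‖v‖)
  simp only [sub_zero, map_zero, zero_div, sub_zero, add_zero] at hmv
  -- hmv : ‖(f (a+v) - f' a v - f'' v v / 2) - f a‖ ≤ c/4 * ‖v‖ * ‖v‖
  rw [h0] at hmv
  simp only [ContinuousLinearMap.zero_apply, sub_zero] at hmv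
  have habs := abs_le.1 (by simpa [Real.norm_eq_abs] using hmv)
  have hq := hlower v
  have haz : a + v = z := by simp [hv]
  have hnv : (0:ℝ) < ‖v‖ := norm_pos_iff.2 hvne
  rw [haz] at habs
  have hsq : ‖v‖ * ‖v‖ = ‖v‖ ^ 2 := by ring
  have hcs : 0 < c * ‖v‖ ^ 2 := mul_pos hcpos (pow_pos hnv 2)
  nlinarith [habs.1, hq, hcs, hsq]

/-- second directional derivative of Φ at a stationary point and
the necessary/sufficient second-order conditions. -/
theorem dpg_second_order_conditions
    (X Y : Type*) [NormedAddCommGroup X] [NormedSpace ℝ X]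
    [FiniteDimensional ℝ X]
    [NormedAddCommGroup Y] [InnerProductSpace ℝ Y] [FiniteDimensional ℝ Y]
    (B : X → (Y →L[ℝ] ℝ))
    (DB : X → X →L[ℝ] (Y →L[ℝ] ℝ))
    (D2B : X → X →L[ℝ] X →L[ℝ] (Y →L[ℝ] ℝ))
    (hB : ∀ ξ, HasFDerivAt B (DB ξ) ξ)
    (hDB : ∀ ξ, HasFDerivAt DB (D2B ξ) ξ)
    (F : Y →L[ℝ] ℝ)
    (Φ : X → ℝ) (hΦ : ∀ ξ, Φ ξ = ‖F - B ξ‖ ^ 2 / 2)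
    (xh : X) (yh : Y)
    (hyh : ∀ η : Y, ⟪yh, η⟫ = F η - B xh η)
    (hstat : ∀ ξ : X, HasDerivAt (fun t : ℝ => Φ (xh + t • ξ)) 0 0) :
    (∀ ξ : X, deriv (deriv (fun t : ℝ => Φ (xh + t • ξ))) 0
        = ‖DB xh ξ‖ ^ 2 - D2B xh ξ ξ yh) ∧
    (IsLocalMin Φ xh → ∀ ξ : X, D2B xh ξ ξ yh ≤ ‖DB xh ξ‖ ^ 2) ∧
    ((∀ ξ : X, ξ ≠ 0 → D2B xh ξ ξ yh < ‖DB xh ξ‖ ^ 2) →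
      ∃ U ∈ nhds xh, ∀ z ∈ U, z ≠ xh → Φ xh < Φ z) := by
  classical
  -- Riesz representation as a real linear isometry equivalence
  set R : (Y →L[ℝ] ℝ) ≃ₗᵢ[ℝ] Y := (InnerProductSpace.toDual ℝ Y).symm with hRdef
  set Rc : (Y →L[ℝ] ℝ) →L[ℝ] Y :=
    R.toContinuousLinearEquiv.toContinuousLinearMap with hRcdef
  have hRc_apply : ∀ g : Y →L[ℝ] ℝ, Rc g = R g := fun g => rfl
  have hR_inner : ∀ (g : Y →L[ℝ] ℝ) (y : Y), ⟪Rc g, y⟫ = g y := by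
    intro g y
    rw [hRc_apply]
    exact InnerProductSpace.toDual_symm_apply
  have hR_norm : ∀ g : Y →L[ℝ] ℝ, ‖Rc g‖ = ‖g‖ := fun g => by
    rw [hRc_apply]; exact R.norm_map g
  set r : X → Y := fun ξ => Rc (F - B ξ) with hrdef
  set L : X → X →L[ℝ] Y := fun ξ => -(Rc.comp (DB ξ)) with hLdef
  have hr_deriv : ∀ ξ, HasFDerivAt r (L ξ) ξ := by
    intro ξ
    have h1 : HasFDerivAt (fun ξ => F - B ξ) (-(DB ξ)) ξ := by
      have := (hasFDerivAt_const F ξ).sub (hB ξ); rwa [zero_sub] at this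
    have h2 := Rc.hasFDerivAt.comp ξ h1
    rw [ContinuousLinearMap.comp_neg] at h2
    exact h2
  have hr_xh : r xh = yh := by
    have hd : InnerProductSpace.toDual ℝ Y yh = F - B xh := by
      ext η
      rw [InnerProductSpace.toDual_apply_apply]
      simpa using hyh η
    show Rc (F - B xh) = yh
    rw [hRc_apply, ← hd, hRdef]
    exact (InnerProductSpace.toDual ℝ Y).symm_apply_apply yh
  have hΦeq : Φ = fun ξ => (2⁻¹ : ℝ) • ⟪r ξ, r ξ⟫ := by
    funext ξ
    rw [hΦ ξ, real_inner_self_eq_norm_sq, hrdef]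
    simp only [hR_norm, smul_eq_mul]
    ring
  set Φ' : X → X →L[ℝ] ℝ := fun ξ => (innerSL ℝ (r ξ)).comp (L ξ) with hΦ'def
  have hΦ'_deriv : ∀ ξ, HasFDerivAt Φ (Φ' ξ) ξ := by
    intro ξ
    have hi := ((hr_deriv ξ).inner (𝕜 := ℝ) (hr_deriv ξ)).const_smul (2⁻¹ : ℝ)
    rw [hΦeq]
    have heq : (2⁻¹ : ℝ) • (fderivInnerCLM ℝ (r ξ, r ξ)).comp ((L ξ).prod (L ξ)) = Φ' ξ := by
      ext w
      simp only [ContinuousLinearMap.smul_apply, ContinuousLinearMap.coe_comp',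
        Function.comp_apply, fderivInnerCLM_apply, ContinuousLinearMap.prod_apply,
        hΦ'def, innerSL_apply_apply, smul_eq_mul]
      rw [real_inner_comm (L ξ w) (r ξ)]
      ring
    exact heq ▸ hi
  -- the second derivative of Φ at xh
  set iSL : Y →L[ℝ] Y →L[ℝ] ℝ := innerSL ℝ with hiSLdef
  set Bil : (Y →L[ℝ] ℝ) →L[ℝ] (X →L[ℝ] Y) →L[ℝ] (X →L[ℝ] ℝ) :=
    ContinuousLinearMap.compL ℝ X Y ℝ with hBildef
  set L' : X →L[ℝ] X →L[ℝ] Y :=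
    -((ContinuousLinearMap.compL ℝ X (Y →L[ℝ] ℝ) Y Rc).comp (D2B xh)) with hL'def
  have hL_deriv : HasFDerivAt L L' xh := by
    have h1 := (ContinuousLinearMap.compL ℝ X (Y →L[ℝ] ℝ) Y Rc).hasFDerivAt.comp (f := DB) xh (hDB xh)
    exact h1.neg
  set Φ'' : X →L[ℝ] X →L[ℝ] ℝ :=
    Bil.precompR X (iSL (r xh)) L' + Bil.precompL X (iSL.comp (L xh)) (L xh) with hΦ''def
  have hΦ''_deriv : HasFDerivAt Φ' Φ'' xh := by
    have hf1 : HasFDerivAt (fun ξ => iSL (r ξ)) (iSL.comp (L xh)) xh :=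
      iSL.hasFDerivAt.comp xh (hr_deriv xh)
    have h := Bil.hasFDerivAt_of_bilinear hf1 hL_deriv
    exact h
  -- key: value of the second derivative
  have hkey : ∀ ξ : X, Φ'' ξ ξ = ‖DB xh ξ‖ ^ 2 - D2B xh ξ ξ yh := by
    intro ξ
    have h1 : (Bil.precompR X (iSL (r xh)) L') ξ ξ = ⟪yh, L' ξ ξ⟫ := by
      rw [hr_xh]
      simp only [hBildef, hiSLdef, ContinuousLinearMap.precompR_apply,
        ContinuousLinearMap.compL_apply, ContinuousLinearMap.coe_comp', Function.comp_apply]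
      rfl
    have h2 : (Bil.precompL X (iSL.comp (L xh)) (L xh)) ξ ξ = ⟪L xh ξ, L xh ξ⟫ := by
      simp only [hBildef, hiSLdef, ContinuousLinearMap.precompL_apply,
        ContinuousLinearMap.compL_apply, ContinuousLinearMap.coe_comp', Function.comp_apply]
      rfl
    have h3 : L' ξ ξ = -(Rc (D2B xh ξ ξ)) := by simp [hL'def]
    have h4 : L xh ξ = -(Rc (DB xh ξ)) := by simp [hLdef]
    rw [ContinuousLinearMap.add_apply, ContinuousLinearMap.add_apply, h1, h2, h3, h4]
    rw [inner_neg_neg, real_inner_self_eq_norm_sq, hR_norm]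
    rw [inner_neg_right, real_inner_comm, hR_inner]
    ring
  -- stationarity: Φ' xh = 0
  have hline : ∀ (ξ : X) (t : ℝ), HasDerivAt (fun s : ℝ => xh + s • ξ) ξ t := by
    intro ξ t
    simpa using ((hasDerivAt_id t).smul_const ξ).const_add xh
  have hg_deriv : ∀ (ξ : X) (t : ℝ),
      HasDerivAt (fun s : ℝ => Φ (xh + s • ξ)) (Φ' (xh + t • ξ) ξ) t := by
    intro ξ t
    exact (hΦ'_deriv (xh + t • ξ)).comp_hasDerivAt t (hline ξ t)
  have hΦ'xh_zero : ∀ ξ : X, Φ' xh ξ = 0 := by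
    intro ξ
    have h1 := hg_deriv ξ 0
    simp only [zero_smul, add_zero] at h1
    exact h1.unique (hstat ξ)
  have hΦ'xh : Φ' xh = 0 := by ext ξ; simpa using hΦ'xh_zero ξ
  -- second derivative of the 1-d slice
  have hg'_deriv : ∀ ξ : X,
      HasDerivAt (fun t : ℝ => Φ' (xh + t • ξ) ξ) (Φ'' ξ ξ) 0 := by
    intro ξ
    have hx0 : xh + (0:ℝ) • ξ = xh := by simp
    have h1 : HasDerivAt (fun t : ℝ => Φ' (xh + t • ξ)) (Φ'' ξ) 0 := by
      have hd : HasFDerivAt Φ' Φ'' (xh + (0:ℝ) • ξ) := hx0.symm ▸ hΦ''_deriv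
      have := hd.comp_hasDerivAt 0 (hline ξ 0)
      simpa [Function.comp_def] using this
    have h2 := h1.clm_apply (hasDerivAt_const 0 ξ)
    simpa using h2
  refine ⟨?_, ?_, ?_⟩
  · -- Part 1
    intro ξ
    have hd : deriv (fun t : ℝ => Φ (xh + t • ξ)) = fun t => Φ' (xh + t • ξ) ξ :=
      funext fun t => (hg_deriv ξ t).deriv
    rw [hd, (hg'_deriv ξ).deriv, hkey ξ]
  · -- Part 2
    intro hmin ξ
    have hlocmin : IsLocalMin (fun t : ℝ => Φ (xh + t • ξ)) 0 := by
      have hx0 : xh + (0:ℝ) • ξ = xh := by simp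
      have hmin' : IsLocalMin Φ (xh + (0:ℝ) • ξ) := hx0.symm ▸ hmin
      exact hmin'.comp_continuous (g := fun t : ℝ => xh + t • ξ) (b := (0:ℝ)) (hline ξ 0).continuousAt
    have h0 : Φ' (xh + (0:ℝ) • ξ) ξ = 0 := by simpa using hΦ'xh_zero ξ
    have := aux_second_nonneg (hg_deriv ξ) h0 (hg'_deriv ξ) hlocmin
    rw [hkey ξ] at this
    linarith
  · -- Part 3
    intro hstrict
    apply aux_strict_min hΦ'_deriv hΦ''_deriv hΦ'xh
    intro v hv
    rw [hkey v]
    rcases hstrict v hv with h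
    linarith
end
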